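/- The map F₍α,β₎(x,v) = (αx²/((v+β+α)(v+β-α)), v - (v+β)x²/((v+β+α)(v+β-α))) is conjugate to F(x,y) = (2x²/(4-y²), y + x²y/(4-y²)) by the affine change of variables R(x,v) = (-(2/α)x, -(2/α)v - (2/α)β): i.e., R ∘ F₍α,β₎ = F ∘ R wherever defined (α ≠ 0 and denominators nonzero). -/

import Mathlib

/-- F₍α,β₎ is conjugate to F by the affine change of variables
R(x,v) = (-(2/α)x, -(2/α)v - (2/α)β): R ∘ F₍α,β₎ = F ∘ R where defined. -/
theorem F_alpha_beta_conjugate_to_F (α β x v : ℝ) (hα : α ≠ 0)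
    (hden : (v + β + α) * (v + β - α) ≠ 0)
    (hden' : 4 - (-(2 / α) * v - (2 / α) * β) ^ 2 ≠ 0) :
    (-(2 / α) * (α * x ^ 2 / ((v + β + α) * (v + β - α))),
      -(2 / α) * (v - (v + β) * x ^ 2 / ((v + β + α) * (v + β - α)))
        - (2 / α) * β)
    = (2 * (-(2 / α) * x) ^ 2 / (4 - (-(2 / α) * v - (2 / α) * β) ^ 2),
        (-(2 / α) * v - (2 / α) * β)
          + (-(2 / α) * x) ^ 2 * (-(2 / α) * v - (2 / α) * β)
            / (4 - (-(2 / α) * v - (2 / α) * β) ^ 2)) := by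
  have hk : α ^ 2 - (v + β) ^ 2 ≠ 0 := by
    intro h
    apply hden
    nlinarith [h]
  have hrw : 4 - (-(2 / α) * v - 2 / α * β) ^ 2
      = 4 * (α ^ 2 - (v + β) ^ 2) / α ^ 2 := by
    field_simp
    ring
  have h1 : v + β + α ≠ 0 := left_ne_zero_of_mul hden
  have h2 : v + β - α ≠ 0 := right_ne_zero_of_mul hden
  refine Prod.ext ?_ ?_ <;> simp only <;> rw [hrw] <;>
    field_simp <;> ring
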